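/- Let K/ℚ be a finite Galois extension of number fields and V a finite-dimensional ℚ-vector space. Let Gal(K/ℚ) act on V ⊗_ℚ K by σ·(v ⊗ k) = v ⊗ σ(k). Suppose U ⊆ V ⊗_ℚ K is a K-linear subspace such that V ⊗_ℚ K is the internal direct sum ⊕_{σ ∈ Gal(K/ℚ)} U^σ of the Galois translates U^σ = {σ·u | u ∈ U}. Then the image of V in V ⊗_ℚ K under v ↦ v ⊗ 1 equals the set {Σ_{σ ∈ Gal(K/ℚ)} σ·u | u ∈ U}. -/

import Mathlib

open scoped TensorProduct

section Aux

variable (K : Type*) [Field K] [NumberField K] [IsGalois ℚ K]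
    {V : Type*} [AddCommGroup V] [Module ℚ V] [FiniteDimensional ℚ V]

lemma aux_fixedField_top :
    IntermediateField.fixedField (⊤ : Subgroup (K ≃ₐ[ℚ] K)) = ⊥ := by
  have := IsGalois.fixedField_fixingSubgroup (⊥ : IntermediateField ℚ K)
  rwa [IntermediateField.fixingSubgroup_bot] at this

lemma aux_fixed_scalar {k : K} (hk : ∀ σ : K ≃ₐ[ℚ] K, σ k = k) :
    ∃ q : ℚ, algebraMap ℚ K q = k := by
  have hmem : k ∈ IntermediateField.fixedField (⊤ : Subgroup (K ≃ₐ[ℚ] K)) :=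
    fun g => hk g
  rw [aux_fixedField_top, IntermediateField.mem_bot] at hmem
  exact hmem

lemma aux_fixed_mem_range {x : K ⊗[ℚ] V}
    (hx : ∀ σ : K ≃ₐ[ℚ] K, LinearMap.rTensor V σ.toLinearMap x = x) :
    ∃ v : V, (1 : K) ⊗ₜ[ℚ] v = x := by
  classical
  let b := Module.Free.chooseBasis ℚ V
  let bK := b.baseChange K
  set c : Module.Free.ChooseBasisIndex ℚ V → K := fun i => bK.repr x i with hc
  have hrepr : x = ∑ i, c i ⊗ₜ[ℚ] b i := by
    conv_lhs => rw [← bK.sum_repr x]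
    refine Finset.sum_congr rfl fun i _ => ?_
    rw [Module.Basis.baseChange_apply, TensorProduct.smul_tmul', smul_eq_mul, mul_one]
  have hfix : ∀ i, ∀ σ : K ≃ₐ[ℚ] K, σ (c i) = c i := by
    intro i σ
    have h1 : LinearMap.rTensor V σ.toLinearMap x = ∑ j, σ (c j) ⊗ₜ[ℚ] b j := by
      rw [hrepr, map_sum]
      simp [LinearMap.rTensor_tmul]
    have h2 : (∑ j, σ (c j) ⊗ₜ[ℚ] (b j : V)) = ∑ j, c j ⊗ₜ[ℚ] b j := by
      rw [← h1, hx σ, hrepr]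
    have h3 : bK.repr (∑ j, σ (c j) ⊗ₜ[ℚ] (b j : V)) i
        = bK.repr (∑ j, c j ⊗ₜ[ℚ] (b j : V)) i := by rw [h2]
    simpa [bK, Module.Basis.baseChange_repr_tmul, Module.Basis.repr_self,
      Finsupp.single_apply, Finset.sum_ite_eq'] using h3
  choose q hq using fun i => aux_fixed_scalar K (hfix i)
  refine ⟨∑ i, q i • b i, ?_⟩
  rw [hrepr, TensorProduct.tmul_sum]
  refine Finset.sum_congr rfl fun i _ => ?_
  rw [← hq i, ← TensorProduct.smul_tmul, Algebra.smul_def, mul_one]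

lemma aux_rTensor_mul (σ τ : K ≃ₐ[ℚ] K) (x : K ⊗[ℚ] V) :
    LinearMap.rTensor V (σ * τ).toLinearMap x
      = LinearMap.rTensor V σ.toLinearMap (LinearMap.rTensor V τ.toLinearMap x) := by
  have : (σ * τ).toLinearMap = σ.toLinearMap ∘ₗ τ.toLinearMap := rfl
  rw [this, LinearMap.rTensor_comp, LinearMap.comp_apply]

end Aux

/-- Let `K/ℚ` be a finite Galois extension and `V` a finite-dimensional
`ℚ`-vector space, with `Gal(K/ℚ)` acting on `K ⊗_ℚ V` via `σ·(k ⊗ v) = σ(k) ⊗ v`.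
If `U ⊆ K ⊗_ℚ V` is a `K`-subspace such that `K ⊗_ℚ V` is the internal direct sum
`⊕_σ U^σ` of the Galois translates of `U`, then the image of `V` in `K ⊗_ℚ V` (under
`v ↦ 1 ⊗ v`) equals `{Σ_σ σ·u | u ∈ U}`. -/
theorem stmt15 (K : Type*) [Field K] [NumberField K] [IsGalois ℚ K]
    {V : Type*} [AddCommGroup V] [Module ℚ V] [FiniteDimensional ℚ V]
    (U : Submodule K (K ⊗[ℚ] V))
    (hdirect : ∀ x : K ⊗[ℚ] V, ∃! t : (K ≃ₐ[ℚ] K) → (K ⊗[ℚ] V),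
      (∀ σ : K ≃ₐ[ℚ] K, t σ ∈ (LinearMap.rTensor V σ.toLinearMap) '' (U : Set (K ⊗[ℚ] V))) ∧
        x = ∑ σ : K ≃ₐ[ℚ] K, t σ) :
    Set.range (fun v : V => ((1 : K) ⊗ₜ[ℚ] v : K ⊗[ℚ] V)) =
      {x : K ⊗[ℚ] V | ∃ u ∈ U, x = ∑ σ : K ≃ₐ[ℚ] K, LinearMap.rTensor V σ.toLinearMap u} := by
  classical
  ext x
  simp only [Set.mem_range, Set.mem_setOf_eq]
  constructor
  · rintro ⟨v, rfl⟩
    -- x = 1 ⊗ v; use uniqueness of decomposition to show t σ = σ(t 1)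
    obtain ⟨t, ⟨htmem, htsum⟩, htuniq⟩ := hdirect ((1 : K) ⊗ₜ[ℚ] v)
    have hinv : ∀ τ : K ≃ₐ[ℚ] K,
        LinearMap.rTensor V τ.toLinearMap ((1 : K) ⊗ₜ[ℚ] v) = (1 : K) ⊗ₜ[ℚ] v := by
      intro τ
      rw [LinearMap.rTensor_tmul, AlgEquiv.toLinearMap_apply, map_one]
    have key : ∀ τ : K ≃ₐ[ℚ] K,
        (fun σ => LinearMap.rTensor V τ.toLinearMap (t (τ⁻¹ * σ))) = t := by
      intro τ
      refine htuniq _ ⟨?_, ?_⟩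
      · intro σ
        obtain ⟨u, hu, hteq⟩ := htmem (τ⁻¹ * σ)
        refine ⟨u, hu, ?_⟩
        rw [← hteq, ← aux_rTensor_mul, mul_inv_cancel_left]
      · calc (1 : K) ⊗ₜ[ℚ] v
            = LinearMap.rTensor V τ.toLinearMap ((1 : K) ⊗ₜ[ℚ] v) := (hinv τ).symm
          _ = ∑ σ : K ≃ₐ[ℚ] K, LinearMap.rTensor V τ.toLinearMap (t (τ⁻¹ * σ)) := by
              rw [htsum, map_sum]
              exact Fintype.sum_equiv (Equiv.mulLeft τ) _ _
                (fun σ => by simp [inv_mul_cancel_left])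
    -- t 1 ∈ U
    have ht1 : t 1 ∈ U := by
      obtain ⟨u, hu, hteq⟩ := htmem 1
      have : (1 : K ≃ₐ[ℚ] K).toLinearMap = LinearMap.id := rfl
      rw [this, LinearMap.rTensor_id, LinearMap.id_apply] at hteq
      rwa [← hteq]
    refine ⟨t 1, ht1, ?_⟩
    rw [htsum]
    refine Finset.sum_congr rfl fun τ _ => ?_
    have := congrFun (key τ) τ
    rw [inv_mul_cancel] at this
    exact this.symm
  · rintro ⟨u, hu, rfl⟩
    -- the sum is Galois-invariant, hence comes from V
    have hfix : ∀ τ : K ≃ₐ[ℚ] K,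
        LinearMap.rTensor V τ.toLinearMap
          (∑ σ : K ≃ₐ[ℚ] K, LinearMap.rTensor V σ.toLinearMap u)
          = ∑ σ : K ≃ₐ[ℚ] K, LinearMap.rTensor V σ.toLinearMap u := by
      intro τ
      rw [map_sum]
      refine Fintype.sum_equiv (Equiv.mulLeft τ) _ _ fun σ => ?_
      rw [← aux_rTensor_mul]
      rfl
    obtain ⟨v, hv⟩ := aux_fixed_mem_range K hfix
    exact ⟨v, hv⟩
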